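/- Under the reversible measure ν_N (p = 1/K case generalized to arbitrary p > 0), the marginal variance is Var_{ν_N}(η(i)) = N(K−1)(Np+N−1)/(K²(N−1+p)), and for i ≠ j, Cov_{ν_N}(η(i), η(j)) = −Var_{ν_N}(η(i))/(K−1) = (−N²(p+1)+N)/(K²(N−1+p)). -/

import Mathlib

open Finset

noncomputable def gb (x : ℝ) (n : ℕ) : ℝ := ∏ j ∈ Finset.range n, ((x + j) / (j + 1))

lemma gb_succ (x : ℝ) (n : ℕ) : gb x (n + 1) = gb x n * ((x + n) / (n + 1)) := by
  rw [gb, Finset.prod_range_succ]; rfl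

lemma gb_mul_step (x : ℝ) (n : ℕ) : (x + n) * gb x n = ((n : ℝ) + 1) * gb x (n + 1) := by
  rw [gb_succ]
  have : ((n : ℝ) + 1) ≠ 0 := by positivity
  field_simp

lemma gb_vander (x y : ℝ) (n : ℕ) :
    ∑ k ∈ range (n + 1), gb x k * gb y (n - k) = gb (x + y) n := by
  induction n with
  | zero => simp [gb]
  | succ n ih =>
    have hn1 : ((n : ℝ) + 1) ≠ 0 := by positivity
    apply mul_left_cancel₀ hn1
    have key : ((n : ℝ) + 1) * ∑ k ∈ range (n + 1 + 1), gb x k * gb y (n + 1 - k)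
        = (∑ m ∈ range (n + 2), (m : ℝ) * (gb x m * gb y (n + 1 - m)))
          + ∑ m ∈ range (n + 2), ((n + 1 - m : ℕ) : ℝ) * (gb x m * gb y (n + 1 - m)) := by
      rw [Finset.mul_sum, ← Finset.sum_add_distrib]
      apply Finset.sum_congr rfl
      intro m hm
      have hm' : m ≤ n + 1 := Nat.lt_succ_iff.mp (Finset.mem_range.mp hm)
      have hc : (m : ℝ) + ((n + 1 - m : ℕ) : ℝ) = (n : ℝ) + 1 := by
        have := Nat.add_sub_cancel' hm'
        have : ((m + (n + 1 - m) : ℕ) : ℝ) = ((n + 1 : ℕ) : ℝ) := by rw [this]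
        push_cast at this
        linarith
      rw [← hc]; ring
    have hS1 : (∑ m ∈ range (n + 2), (m : ℝ) * (gb x m * gb y (n + 1 - m)))
        = ∑ k ∈ range (n + 1), (x + k) * gb x k * gb y (n - k) := by
      rw [Finset.sum_range_succ']
      simp only [Nat.cast_zero, zero_mul, add_zero]
      apply Finset.sum_congr rfl
      intro k _
      have h2 : n + 1 - (k + 1) = n - k := by omega
      rw [h2]
      push_cast
      linear_combination (-(gb y (n - k))) * gb_mul_step x k
    have hS2 : (∑ m ∈ range (n + 2), ((n + 1 - m : ℕ) : ℝ) * (gb x m * gb y (n + 1 - m)))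
        = ∑ k ∈ range (n + 1), (y + ((n - k : ℕ) : ℝ)) * gb x k * gb y (n - k) := by
      rw [Finset.sum_range_succ]
      simp only [Nat.sub_self, Nat.cast_zero, zero_mul, add_zero]
      apply Finset.sum_congr rfl
      intro k hk
      have hk' : k ≤ n := Nat.lt_succ_iff.mp (Finset.mem_range.mp hk)
      have h2 : n + 1 - k = (n - k) + 1 := by omega
      rw [h2]
      push_cast
      linear_combination (-(gb x k)) * gb_mul_step y (n - k)
    rw [key, hS1, hS2, ← Finset.sum_add_distrib]
    have : ∀ k ∈ range (n + 1),
        (x + k) * gb x k * gb y (n - k) + (y + ((n - k : ℕ) : ℝ)) * gb x k * gb y (n - k)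
        = (x + y + n) * (gb x k * gb y (n - k)) := by
      intro k hk
      have hk' : k ≤ n := Nat.lt_succ_iff.mp (Finset.mem_range.mp hk)
      have hc : (k : ℝ) + ((n - k : ℕ) : ℝ) = (n : ℝ) := by
        have h := Nat.add_sub_cancel' hk'
        have : ((k + (n - k) : ℕ) : ℝ) = ((n : ℕ) : ℝ) := by rw [h]
        push_cast at this; linarith
      linear_combination gb x k * gb y (n - k) * hc
    rw [Finset.sum_congr rfl this, ← Finset.mul_sum, ih, gb_mul_step (x + y) n]
lemma sum_adT_succ (K N : ℕ) (F : (Fin (K + 1) → ℕ) → ℝ) :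
    ∑ η ∈ Finset.Nat.antidiagonalTuple (K + 1) N, F η
    = ∑ ab ∈ Finset.HasAntidiagonal.antidiagonal N, ∑ τ ∈ Finset.Nat.antidiagonalTuple K ab.2,
        F (Fin.cons ab.1 τ) := by
  rw [Finset.sum_sigma']
  refine (Finset.sum_nbij' (fun (η : Fin (K + 1) → ℕ) => (⟨(η 0, ∑ l : Fin K, η l.succ), Fin.tail η⟩ :
      Σ _ : ℕ × ℕ, (Fin K → ℕ))) (fun x => Fin.cons x.1.1 x.2) ?_ ?_ ?_ ?_ ?_)
  · intro η hη
    rw [Finset.Nat.mem_antidiagonalTuple] at hη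
    rw [Finset.mem_sigma]
    constructor
    · rw [Finset.HasAntidiagonal.mem_antidiagonal]
      rw [← hη, Fin.sum_univ_succ]
    · rw [Finset.Nat.mem_antidiagonalTuple]
      rfl
  · intro x hx
    rw [Finset.mem_sigma, Finset.HasAntidiagonal.mem_antidiagonal, Finset.Nat.mem_antidiagonalTuple] at hx
    rw [Finset.Nat.mem_antidiagonalTuple, Fin.sum_cons, hx.2, hx.1]
  · intro η _
    exact Fin.cons_self_tail η
  · intro x hx
    rw [Finset.mem_sigma, Finset.HasAntidiagonal.mem_antidiagonal, Finset.Nat.mem_antidiagonalTuple] at hx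
    refine Sigma.ext ?_ (heq_of_eq ?_)
    · simp only [Fin.cons_zero]
      ext
      · rfl
      · simp only
        rw [show (∑ l : Fin K, (Fin.cons x.1.1 x.2 : Fin (K+1) → ℕ) l.succ) = ∑ l, x.2 l from
          Finset.sum_congr rfl fun l _ => by rw [Fin.cons_succ], hx.2]
    · simp
  · intro η _
    rw [Fin.cons_self_tail η]

lemma gb_pos {x : ℝ} (hx : 0 < x) (n : ℕ) : 0 < gb x n := by
  apply Finset.prod_pos
  intro l _
  positivity

lemma gb_vander' (x y : ℝ) (n : ℕ) :
    ∑ ab ∈ Finset.HasAntidiagonal.antidiagonal n, gb x ab.1 * gb y ab.2 = gb (x + y) n := by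
  rw [Finset.Nat.sum_antidiagonal_eq_sum_range_succ_mk]
  exact gb_vander x y n

lemma sum_adT_prod (K N : ℕ) (x : Fin K → ℝ) :
    ∑ η ∈ Finset.Nat.antidiagonalTuple K N, ∏ l, gb (x l) (η l) = gb (∑ l, x l) N := by
  induction K generalizing N with
  | zero =>
    cases N with
    | zero => simp [gb]
    | succ n =>
      simp only [Finset.Nat.antidiagonalTuple_zero_succ, Finset.sum_empty, Finset.univ_eq_empty,
        Finset.sum_empty]
      rw [gb]
      rw [Finset.prod_range_succ']
      simp
  | succ K ih =>
    rw [sum_adT_succ]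
    have : ∀ ab ∈ Finset.HasAntidiagonal.antidiagonal N,
        (∑ τ ∈ Finset.Nat.antidiagonalTuple K ab.2, ∏ l, gb ((x) l) ((Fin.cons ab.1 τ : Fin (K+1) → ℕ) l))
        = gb (x 0) ab.1 * gb (∑ l : Fin K, x l.succ) ab.2 := by
      intro ab _
      have hterm : ∀ τ, (∏ l, gb (x l) ((Fin.cons ab.1 τ : Fin (K+1) → ℕ) l))
          = gb (x 0) ab.1 * ∏ l, gb (x l.succ) (τ l) := by
        intro τ
        rw [Fin.prod_univ_succ]
        simp [Fin.cons_zero, Fin.cons_succ]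
      rw [Finset.sum_congr rfl fun τ _ => hterm τ, ← Finset.mul_sum, ih]
    rw [Finset.sum_congr rfl this, gb_vander', ← Fin.sum_univ_succ]
lemma gb_step (x : ℝ) (n : ℕ) : ((n : ℝ) + 1) * gb x (n + 1) = x * gb (x + 1) n := by
  induction n with
  | zero => simp [gb_succ, gb]
  | succ n ih =>
    have h1 : ((n : ℝ) + 1) ≠ 0 := by positivity
    have h2 : ((n : ℝ) + 1 + 1) ≠ 0 := by positivity
    rw [gb_succ x (n+1), gb_succ (x+1) n]
    push_cast
    rw [show ((n:ℝ)+1+1) * (gb x (n+1) * ((x + (n+1))/((n:ℝ)+1+1))) = gb x (n+1) * (x + (n+1)) by field_simp]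
    rw [show x * (gb (x+1) n * ((x + 1 + n)/((n:ℝ)+1))) = (((n:ℝ)+1) * gb x (n+1)) * ((x+1+n)/((n:ℝ)+1)) by rw [ih]; ring]
    field_simp
    ring

-- shift lemma
lemma sum_adT_shift (K N : ℕ) (i : Fin K) (x : Fin K → ℝ) (G : (Fin K → ℕ) → ℝ) :
    ∑ η ∈ Finset.Nat.antidiagonalTuple K (N + 1), (η i : ℝ) * G η * ∏ l, gb (x l) (η l)
    = x i * ∑ τ ∈ Finset.Nat.antidiagonalTuple K N,
        G (Function.update τ i (τ i + 1)) * ∏ l, gb (Function.update x i (x i + 1) l) (τ l) := by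
  rw [Finset.mul_sum]
  rw [← Finset.sum_filter_of_ne (s := Finset.Nat.antidiagonalTuple K (N + 1))
      (p := fun η => 0 < η i) (f := fun η => (η i : ℝ) * G η * ∏ l, gb (x l) (η l))
      (by intro η _ h; by_contra hc; simp only [not_lt, Nat.le_zero] at hc; simp [hc] at h)]
  refine Finset.sum_nbij' (fun (η : Fin K → ℕ) => Function.update η i (η i - 1))
    (fun (τ : Fin K → ℕ) => Function.update τ i (τ i + 1)) ?_ ?_ ?_ ?_ ?_
  · intro η hη
    rw [Finset.mem_filter, Finset.Nat.mem_antidiagonalTuple] at hη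
    rw [Finset.Nat.mem_antidiagonalTuple]
    rw [Finset.sum_update_of_mem (Finset.mem_univ i), Finset.sdiff_singleton_eq_erase]
    have h2 : η i + ∑ l ∈ Finset.univ.erase i, η l = N + 1 := by
      rw [Finset.add_sum_erase _ _ (Finset.mem_univ i)]; exact hη.1
    omega
  · intro τ hτ
    rw [Finset.Nat.mem_antidiagonalTuple] at hτ
    rw [Finset.mem_filter, Finset.Nat.mem_antidiagonalTuple]
    constructor
    · rw [Finset.sum_update_of_mem (Finset.mem_univ i), Finset.sdiff_singleton_eq_erase]
      have h2 : τ i + ∑ l ∈ Finset.univ.erase i, τ l = N := by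
        rw [Finset.add_sum_erase _ _ (Finset.mem_univ i)]; exact hτ
      omega
    · simp
  · intro η hη
    rw [Finset.mem_filter] at hη
    have h1 : 1 ≤ η i := hη.2
    simp only [Function.update_idem, Function.update_self]
    rw [Nat.sub_add_cancel h1, Function.update_eq_self]
  · intro τ _
    simp only [Function.update_idem, Function.update_self]
    rw [Nat.add_sub_cancel, Function.update_eq_self]
  · intro η hη
    rw [Finset.mem_filter] at hη
    have h1 : 1 ≤ η i := hη.2
    -- term identity
    have hGarg : Function.update (Function.update η i (η i - 1)) i
        ((Function.update η i (η i - 1)) i + 1) = η := by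
      rw [Function.update_idem, Function.update_self, Nat.sub_add_cancel h1,
        Function.update_eq_self]
    rw [hGarg]
    -- products
    rw [← Finset.mul_prod_erase _ _ (Finset.mem_univ i), ← Finset.mul_prod_erase _ _ (Finset.mem_univ i)]
    have hoff : ∀ l ∈ Finset.univ.erase i,
        gb (Function.update x i (x i + 1) l) ((Function.update η i (η i - 1)) l) = gb (x l) (η l) := by
      intro l hl
      have hli : l ≠ i := Finset.ne_of_mem_erase hl
      rw [Function.update_of_ne hli, Function.update_of_ne hli]
    rw [Finset.prod_congr rfl hoff]
    simp only [Function.update_self]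
    -- now: (η i) * G η * (gb (x i) (η i) * P) = x i * (G η * (gb (x i + 1) (η i - 1) * P))
    obtain ⟨m, hm⟩ : ∃ m, η i = m + 1 := ⟨η i - 1, by omega⟩
    rw [hm]
    have hstep := gb_step (x i) m
    rw [Nat.add_sub_cancel]
    push_cast
    linear_combination (G η * ∏ l ∈ Finset.univ.erase i, gb (x l) (η l)) * hstep
lemma sum_update_real {K : ℕ} (x : Fin K → ℝ) (i : Fin K) (v : ℝ) :
    ∑ l, Function.update x i v l = (∑ l, x l) - x i + v := by
  rw [Finset.sum_update_of_mem (Finset.mem_univ i), Finset.sdiff_singleton_eq_erase,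
    Finset.sum_erase_eq_sub (Finset.mem_univ i)]
  ring

lemma sum_const_real {K : ℕ} (α : ℝ) : ∑ _l : Fin K, α = K * α := by
  rw [Finset.sum_const, Finset.card_univ, Fintype.card_fin, nsmul_eq_mul]

lemma moment1 {K : ℕ} (M : ℕ) (α : ℝ) (r : Fin K) :
    ∑ η ∈ Finset.Nat.antidiagonalTuple K (M + 1), (η r : ℝ) * ∏ l, gb α (η l)
      = α * gb (K * α + 1) M := by
  have h := sum_adT_shift K M r (fun _ => α) (fun _ => 1)
  simp only [mul_one, one_mul] at h
  rw [h]
  congr 1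
  rw [sum_adT_prod, sum_update_real, sum_const_real]
  ring_nf

lemma moment2 {K : ℕ} (M : ℕ) (α : ℝ) (r : Fin K) :
    ∑ η ∈ Finset.Nat.antidiagonalTuple K (M + 2), (η r : ℝ) * ((η r : ℝ) - 1) * ∏ l, gb α (η l)
      = α * (α + 1) * gb (K * α + 2) M := by
  have h := sum_adT_shift K (M + 1) r (fun _ => α) (fun η => (η r : ℝ) - 1)
  simp only [Function.update_self] at h
  rw [h]
  have h2 := sum_adT_shift K M r (Function.update (fun _ : Fin K => α) r (α + 1)) (fun _ => 1)
  simp only [mul_one, one_mul, Function.update_self] at h2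
  have hc : ∀ τ : Fin K → ℕ, ((τ r + 1 : ℕ) : ℝ) - 1 = (τ r : ℝ) := by intro τ; push_cast; ring
  rw [Finset.sum_congr rfl fun τ _ => by rw [hc]]
  rw [h2, sum_adT_prod]
  rw [Function.update_idem, sum_update_real, sum_const_real]
  ring_nf

lemma moment11 {K : ℕ} (M : ℕ) (α : ℝ) (r s : Fin K) (hrs : r ≠ s) :
    ∑ η ∈ Finset.Nat.antidiagonalTuple K (M + 2), (η r : ℝ) * (η s : ℝ) * ∏ l, gb α (η l)
      = α ^ 2 * gb (K * α + 2) M := by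
  have h := sum_adT_shift K (M + 1) r (fun _ => α) (fun η => (η s : ℝ))
  rw [h]
  have hG : ∀ τ : Fin K → ℕ, ((Function.update τ r (τ r + 1)) s : ℝ) = (τ s : ℝ) := by
    intro τ; rw [Function.update_of_ne (Ne.symm hrs)]
  rw [Finset.sum_congr rfl fun τ _ => by rw [hG]]
  have h2 := sum_adT_shift K M s (Function.update (fun _ : Fin K => α) r (α + 1)) (fun _ => 1)
  simp only [mul_one, one_mul] at h2
  rw [h2, sum_adT_prod]
  simp only [Function.update_of_ne (Ne.symm hrs)]
  rw [sum_update_real, sum_update_real, sum_const_real]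
  simp only [Function.update_self, Function.update_of_ne (Ne.symm hrs)]
  ring_nf

/-- The unnormalized reversible weight `∏_{i=1}^K ∏_{j=0}^{η(i)-1} (N-1+Kpj)/(j+1)`. -/
noncomputable def cgWeight (K N : ℕ) (p : ℝ) (η : Fin K → ℕ) : ℝ :=
  ∏ i, ∏ j ∈ Finset.range (η i), (((N : ℝ) - 1 + K * p * j) / (j + 1))

/-- Expectation of `f` under the normalized reversible measure `ν_N`. -/
noncomputable def cgExp (K N : ℕ) (p : ℝ) (f : (Fin K → ℕ) → ℝ) : ℝ :=
  (∑ η ∈ Finset.Nat.antidiagonalTuple K N, cgWeight K N p η * f η) /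
    (∑ η ∈ Finset.Nat.antidiagonalTuple K N, cgWeight K N p η)

lemma gbdef (x : ℝ) (n : ℕ) : gb x n = ∏ j ∈ Finset.range n, ((x + j) / (j + 1)) := rfl

lemma cgWeight_eq (K N : ℕ) (p : ℝ) (hKp : (K : ℝ) * p ≠ 0) (η : Fin K → ℕ)
    (hη : η ∈ Finset.Nat.antidiagonalTuple K N) :
    cgWeight K N p η = ((K : ℝ) * p) ^ N * ∏ l, gb (((N : ℝ) - 1) / ((K : ℝ) * p)) (η l) := by
  set α := ((N : ℝ) - 1) / ((K : ℝ) * p) with hα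
  have hKpα : (K : ℝ) * p * α = (N : ℝ) - 1 := by rw [hα]; field_simp; exact mul_div_cancel_left₀ _ hKp
  have hper : ∀ n : ℕ, ∏ j ∈ Finset.range n, (((N : ℝ) - 1 + K * p * j) / (j + 1))
      = ((K : ℝ) * p) ^ n * gb α n := by
    intro n
    rw [gbdef, show ((K : ℝ) * p) ^ n = ∏ _j ∈ Finset.range n, ((K : ℝ) * p) by
      rw [Finset.prod_const, Finset.card_range], ← Finset.prod_mul_distrib]
    apply Finset.prod_congr rfl
    intro l _
    rw [← mul_div_assoc, mul_add, hKpα]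
  rw [cgWeight, Finset.prod_congr rfl (fun l _ => hper (η l)), Finset.prod_mul_distrib,
    Finset.prod_pow_eq_pow_sum, Finset.Nat.mem_antidiagonalTuple.mp hη]

lemma cgExp_eq (K N : ℕ) (p : ℝ) (hKp : (K : ℝ) * p ≠ 0) (hKα : 0 < K * (((N : ℝ) - 1) / ((K : ℝ) * p)))
    (f : (Fin K → ℕ) → ℝ) :
    cgExp K N p f = (∑ η ∈ Finset.Nat.antidiagonalTuple K N,
        (∏ l, gb (((N : ℝ) - 1) / ((K : ℝ) * p)) (η l)) * f η) / gb (K * (((N : ℝ) - 1) / ((K : ℝ) * p))) N := by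
  set α := ((N : ℝ) - 1) / ((K : ℝ) * p) with hα
  have hW : ∑ η ∈ Finset.Nat.antidiagonalTuple K N, ∏ l, gb α (η l) = gb (K * α) N := by
    have := sum_adT_prod K N (fun _ => α)
    rwa [sum_const_real] at this
  have hnum : ∑ η ∈ Finset.Nat.antidiagonalTuple K N, cgWeight K N p η * f η
      = ((K : ℝ) * p) ^ N * ∑ η ∈ Finset.Nat.antidiagonalTuple K N, (∏ l, gb α (η l)) * f η := by
    rw [Finset.mul_sum]
    apply Finset.sum_congr rfl
    intro η hη
    rw [cgWeight_eq K N p hKp η hη]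
    ring
  have hden : ∑ η ∈ Finset.Nat.antidiagonalTuple K N, cgWeight K N p η
      = ((K : ℝ) * p) ^ N * gb ((K : ℝ) * α) N := by
    rw [← hW, Finset.mul_sum]
    apply Finset.sum_congr rfl
    intro η hη
    rw [cgWeight_eq K N p hKp η hη]
  rw [cgExp, hnum, hden, mul_div_mul_left _ _ (pow_ne_zero N hKp)]

/-- Under the reversible measure `ν_N` of the complete graph Fleming-Viot process,
`Var(η(i)) = N(K-1)(Np+N-1)/(K²(N-1+p))` and for `i ≠ j`,
`Cov(η(i),η(j)) = -Var(η(i))/(K-1) = (-N²(p+1)+N)/(K²(N-1+p))`. -/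
theorem stmt_13 (K N : ℕ) (hK : 2 ≤ K) (hN : 2 ≤ N) (p : ℝ) (hp : 0 < p)
    (i j : Fin K) (hij : i ≠ j) :
    cgExp K N p (fun η => (η i : ℝ) ^ 2) - (cgExp K N p (fun η => (η i : ℝ))) ^ 2 =
      (N : ℝ) * ((K : ℝ) - 1) * ((N : ℝ) * p + N - 1) /
        ((K : ℝ) ^ 2 * ((N : ℝ) - 1 + p)) ∧
    cgExp K N p (fun η => (η i : ℝ) * (η j : ℝ)) -
        cgExp K N p (fun η => (η i : ℝ)) * cgExp K N p (fun η => (η j : ℝ)) =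
      -(cgExp K N p (fun η => (η i : ℝ) ^ 2) -
          (cgExp K N p (fun η => (η i : ℝ))) ^ 2) / ((K : ℝ) - 1) ∧
    cgExp K N p (fun η => (η i : ℝ) * (η j : ℝ)) -
        cgExp K N p (fun η => (η i : ℝ)) * cgExp K N p (fun η => (η j : ℝ)) =
      (-(N : ℝ) ^ 2 * (p + 1) + N) / ((K : ℝ) ^ 2 * ((N : ℝ) - 1 + p)) := by
  obtain ⟨M, rfl⟩ : ∃ M, N = M + 2 := ⟨N - 2, by omega⟩
  have hKR : (0 : ℝ) < K := by exact_mod_cast Nat.lt_of_lt_of_le two_pos hK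
  have hKp : (K : ℝ) * p ≠ 0 := by positivity
  obtain ⟨α, hα⟩ : ∃ α : ℝ, α = (((M + 2 : ℕ) : ℝ) - 1) / ((K : ℝ) * p) := ⟨_, rfl⟩
  have hαval : α = ((M : ℝ) + 1) / ((K : ℝ) * p) := by rw [hα]; push_cast; ring_nf
  have hαpos : 0 < α := by rw [hαval]; positivity
  have hKαpos : 0 < (K : ℝ) * α := by positivity
  have hG0 : 0 < gb ((K : ℝ) * α) (M + 2) := gb_pos hKαpos _
  have hG1 : 0 < gb ((K : ℝ) * α + 1) (M + 1) := gb_pos (by linarith) _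
  have hG2 : 0 < gb ((K : ℝ) * α + 2) M := gb_pos (by linarith) _
  -- step relations
  have he : ((M : ℝ) + 2) * gb ((K : ℝ) * α) (M + 2) = (K : ℝ) * α * gb ((K : ℝ) * α + 1) (M + 1) := by
    have := gb_step ((K : ℝ) * α) (M + 1)
    push_cast at this
    linarith [this]
  have hf : ((M : ℝ) + 1) * gb ((K : ℝ) * α + 1) (M + 1) = ((K : ℝ) * α + 1) * gb ((K : ℝ) * α + 2) M := by
    have := gb_step ((K : ℝ) * α + 1) M
    rw [show (K : ℝ) * α + 1 + 1 = (K : ℝ) * α + 2 by ring] at this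
    linarith [this]
  -- expectations
  have hexp := cgExp_eq K (M + 2) p hKp (by rw [← hα]; exact hKαpos)
  rw [← hα] at hexp
  have hE1 : ∀ r : Fin K, cgExp K (M + 2) p (fun η => (η r : ℝ)) = ((M : ℝ) + 2) / K := by
    intro r
    rw [hexp, Finset.sum_congr rfl (fun η _ => mul_comm (∏ l, gb α (η l)) ((η r : ℝ))),
      moment1 (M + 1) α r]
    rw [div_eq_div_iff (ne_of_gt hG0) (ne_of_gt hKR)]
    push_cast
    linear_combination -he
  have hE2 : cgExp K (M + 2) p (fun η => (η i : ℝ) ^ 2)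
      = (α * (α + 1) * gb ((K : ℝ) * α + 2) M + α * gb ((K : ℝ) * α + 1) (M + 1))
        / gb ((K : ℝ) * α) (M + 2) := by
    rw [hexp]
    congr 1
    have hsplit : ∀ η : Fin K → ℕ, (∏ l, gb α (η l)) * (η i : ℝ) ^ 2
        = (η i : ℝ) * ((η i : ℝ) - 1) * ∏ l, gb α (η l) + (η i : ℝ) * ∏ l, gb α (η l) := by
      intro η; ring
    rw [Finset.sum_congr rfl (fun η _ => hsplit η), Finset.sum_add_distrib,
      moment2 M α i, moment1 (M + 1) α i]
  have hEij : cgExp K (M + 2) p (fun η => (η i : ℝ) * (η j : ℝ))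
      = α ^ 2 * gb ((K : ℝ) * α + 2) M / gb ((K : ℝ) * α) (M + 2) := by
    rw [hexp, Finset.sum_congr rfl
        (fun η _ => mul_comm (∏ l, gb α (η l)) ((η i : ℝ) * (η j : ℝ))),
      moment11 M α i j hij]
  -- ratio values
  have hg1 : gb ((K : ℝ) * α + 1) (M + 1) / gb ((K : ℝ) * α) (M + 2) = ((M : ℝ) + 2) / ((K : ℝ) * α) := by
    rw [div_eq_div_iff (ne_of_gt hG0) (ne_of_gt hKαpos)]
    linarith [he]
  have hg2 : gb ((K : ℝ) * α + 2) M / gb ((K : ℝ) * α) (M + 2)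
      = ((M : ℝ) + 1) * ((M : ℝ) + 2) / (((K : ℝ) * α + 1) * ((K : ℝ) * α)) := by
    rw [div_eq_div_iff (ne_of_gt hG0) (by positivity)]
    linear_combination (-(((M : ℝ) + 1)) * he) - (K : ℝ) * α * hf
  -- final numeric values
  have hE2v : cgExp K (M + 2) p (fun η => (η i : ℝ) ^ 2)
      = α * (α + 1) * (((M : ℝ) + 1) * ((M : ℝ) + 2) / (((K : ℝ) * α + 1) * ((K : ℝ) * α)))
        + α * (((M : ℝ) + 2) / ((K : ℝ) * α)) := by
    rw [hE2, add_div, mul_div_assoc, mul_div_assoc, hg1, hg2]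
  have hEijv : cgExp K (M + 2) p (fun η => (η i : ℝ) * (η j : ℝ))
      = α ^ 2 * (((M : ℝ) + 1) * ((M : ℝ) + 2) / (((K : ℝ) * α + 1) * ((K : ℝ) * α))) := by
    rw [hEij, mul_div_assoc, hg2]
  -- setup for pure arithmetic
  have hKα : (K : ℝ) * α = ((M : ℝ) + 1) / p := by rw [hαval]; field_simp
  have hKα1 : (K : ℝ) * α + 1 = ((M : ℝ) + 1 + p) / p := by rw [hKα]; field_simp
  have hMp : (0 : ℝ) < (M : ℝ) + 1 + p := by positivity
  have hK1 : (K : ℝ) - 1 ≠ 0 := by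
    have : (2 : ℝ) ≤ K := by exact_mod_cast hK
    linarith
  have hpne : p ≠ 0 := ne_of_gt hp
  have hKne : (K : ℝ) ≠ 0 := ne_of_gt hKR
  have hcast : ((M + 2 : ℕ) : ℝ) = (M : ℝ) + 2 := by push_cast; ring
  have hM1 : ((M : ℝ) + 1) ≠ 0 := by positivity
  have hMpne : ((M : ℝ) + 1 + p) ≠ 0 := ne_of_gt hMp
  have hE2c : cgExp K (M + 2) p (fun η => (η i : ℝ) ^ 2)
      = ((M : ℝ) + 2) * ((M : ℝ) + 1) * (((M : ℝ) + 1) + K * p) / ((K : ℝ) ^ 2 * (((M : ℝ) + 1) + p))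
        + ((M : ℝ) + 2) / K := by
    rw [hE2v, hKα1, hKα, hαval]
    field_simp
  have hEijc : cgExp K (M + 2) p (fun η => (η i : ℝ) * (η j : ℝ))
      = ((M : ℝ) + 2) * ((M : ℝ) + 1) ^ 2 / ((K : ℝ) ^ 2 * (((M : ℝ) + 1) + p)) := by
    rw [hEijv, hKα1, hKα, hαval]
    field_simp
  have hden : ((K : ℝ) ^ 2 * (((M : ℝ) + 1) + p)) ≠ 0 := by positivity
  have hK2 : ((K : ℝ) ^ 2) ≠ 0 := by positivity
  refine ⟨?_, ?_, ?_⟩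
  · rw [hE2c, hE1 i, hcast,
      show ((M : ℝ) + 2 - 1 + p) = (M : ℝ) + 1 + p by ring]
    field_simp
    ring
  · rw [hE2c, hEijc, hE1 i, hE1 j]
    field_simp
    ring
  · rw [hEijc, hE1 i, hE1 j, hcast,
      show ((M : ℝ) + 2 - 1 + p) = (M : ℝ) + 1 + p by ring]
    field_simp
    ring
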